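/- Let R₊ be the orthogonal projection of L²(𝕋) onto the closed linear span of {eₙ : n ≥ 0}, where eₙ(e^{iθ}) = e^{inθ}. For f, g ∈ L^∞(𝕋) with conj(f) = g a.e., define W = M_g∘[M_f, R₊] − M_f∘[M_g, R₊] on L²(𝕋). Then for all m, n ∈ ℕ: ⟨W eₙ, eₘ⟩ = ∑_{j=0}^∞ [ conj(f̂(−(j+m+1)))·f̂(−(j+n+1)) − conj(ĝ(−(j+m+1)))·ĝ(−(j+n+1)) ], where ĥ(k) = (1/2π)∫₀^{2π} h(e^{iθ}) e^{−ikθ} dθ; that is, R₊WR₊ = Γ_f*Γ_f − Γ_g*Γ_g, where Γ_φ is the Hankel operator on H² with matrix entries ⟨Γ_φ eₙ, eₘ⟩ = φ̂(−(m+n+1)). -/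

import Mathlib

open MeasureTheory AddCircle
open scoped Real ENNReal InnerProductSpace

instance : Fact (0 < 2 * π) := ⟨by positivity⟩

/-- The Hardy subspace `H²` of `L²(𝕋)`: the closed linear span of `{eₙ : n ≥ 0}`. -/
noncomputable def hardySubmodule :
    Submodule ℂ (Lp ℂ 2 (@haarAddCircle (2 * π) _)) :=
  (Submodule.span ℂ (Set.range fun n : ℕ => fourierLp 2 (n : ℤ))).topologicalClosure

instance : CompleteSpace hardySubmodule :=
  Submodule.topologicalClosure.completeSpace _

/-- The Riesz projection `R₊`: the orthogonal projection of `L²(𝕋)` onto the Hardy space. -/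
noncomputable def rieszPlus :
    Lp ℂ 2 (@haarAddCircle (2 * π) _) →L[ℂ] Lp ℂ 2 (@haarAddCircle (2 * π) _) :=
  hardySubmodule.subtypeL ∘L hardySubmodule.orthogonalProjectionOnto

/-- For `f, g ∈ L^∞(𝕋)` with `conj f = g` a.e., the compression of
`W = M_g[M_f,R₊] − M_f[M_g,R₊]` to `H²` has matrix entries
`⟨W eₙ, eₘ⟩ = ∑_j (conj f̂(−(j+m+1))·f̂(−(j+n+1)) − conj ĝ(−(j+m+1))·ĝ(−(j+n+1)))`;
that is, `R₊WR₊ = Γ_f*Γ_f − Γ_g*Γ_g`. -/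
lemma aux_fourierCoeff_congr {h₁ h₂ : AddCircle (2 * π) → ℂ}
    (h : h₁ =ᵐ[@haarAddCircle (2 * π) _] h₂) (n : ℤ) :
    fourierCoeff h₁ n = fourierCoeff h₂ n := by
  unfold fourierCoeff
  exact integral_congr_ae (by filter_upwards [h] with x hx; rw [hx])

lemma aux_fourierCoeff_mul_fourier (h : AddCircle (2 * π) → ℂ) (l k : ℤ) :
    fourierCoeff (fun x => h x * fourier l x) k = fourierCoeff h (k - l) := by
  unfold fourierCoeff
  congr 1
  funext x
  simp only [smul_eq_mul]
  rw [show (-(k - l)) = -k + l by ring, fourier_add]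
  ring

lemma aux_rieszPlus_fourierLp (k : ℤ) :
    rieszPlus (fourierLp 2 k) = if 0 ≤ k then (fourierLp 2 k : Lp ℂ 2 (@haarAddCircle (2 * π) _)) else 0 := by
  split_ifs with hk
  · have hmem : (fourierLp 2 k : Lp ℂ 2 (@haarAddCircle (2 * π) _)) ∈ hardySubmodule := by
      apply Submodule.le_topologicalClosure
      apply Submodule.subset_span
      exact ⟨k.toNat, by simp [Int.toNat_of_nonneg hk]⟩
    exact Submodule.starProjection_eq_self_iff.mpr hmem
  · have hmem : (fourierLp 2 k : Lp ℂ 2 (@haarAddCircle (2 * π) _)) ∈ hardySubmoduleᗮ := by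
      have horth : ∀ n : ℕ, ⟪(fourierLp 2 k : Lp ℂ 2 (@haarAddCircle (2 * π) _)),
          fourierLp 2 (n : ℤ)⟫_ℂ = 0 := by
        intro n
        have := @orthonormal_fourier (2 * π) _
        rw [orthonormal_iff_ite] at this
        rw [this k (n : ℤ)]
        have : k ≠ (n : ℤ) := by omega
        simp [this]
      have hle : Submodule.span ℂ (Set.range fun n : ℕ => (fourierLp 2 (n : ℤ) :
            Lp ℂ 2 (@haarAddCircle (2 * π) _)))
          ≤ (ℂ ∙ (fourierLp 2 k : Lp ℂ 2 (@haarAddCircle (2 * π) _)))ᗮ := by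
        rw [Submodule.span_le]
        rintro _ ⟨n, rfl⟩
        exact Submodule.mem_orthogonal_singleton_iff_inner_right.mpr (horth n)
      rw [hardySubmodule, ← Submodule.orthogonal_orthogonal_eq_closure,
        Submodule.triorthogonal_eq_orthogonal]
      rw [Submodule.mem_orthogonal]
      intro u hu
      have := hle hu
      rw [Submodule.mem_orthogonal_singleton_iff_inner_right] at this
      rw [← inner_conj_symm, this, map_zero]
    simp only [rieszPlus, ContinuousLinearMap.comp_apply,
      Submodule.orthogonalProjectionOnto_apply_of_mem_orthogonal hmem]
    simp

lemma aux_hasSum_inner_rieszPlus (u v : Lp ℂ 2 (@haarAddCircle (2 * π) _)) :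
    HasSum (fun j : ℕ => (starRingEnd ℂ) (fourierCoeff (u : AddCircle (2 * π) → ℂ) (j : ℤ))
        * fourierCoeff (v : AddCircle (2 * π) → ℂ) (j : ℤ))
      ⟪u, rieszPlus v⟫_ℂ := by
  set L := (innerSL ℂ u).comp rieszPlus with hL
  have h := ((@fourierBasis (2 * π) _).hasSum_repr v).mapL L
  have hterm : ∀ k : ℤ, L ((@fourierBasis (2 * π) _).repr v k • (@fourierBasis (2 * π) _) k)
      = if 0 ≤ k then (starRingEnd ℂ) (fourierCoeff (u : AddCircle (2 * π) → ℂ) k)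
          * fourierCoeff (v : AddCircle (2 * π) → ℂ) k else 0 := by
    intro k
    have hbk : (@fourierBasis (2 * π) _) k = fourierLp 2 k := congrFun coe_fourierBasis k
    have h1 : L ((@fourierBasis (2 * π) _).repr v k • (@fourierBasis (2 * π) _) k)
        = (@fourierBasis (2 * π) _).repr v k * L ((@fourierBasis (2 * π) _) k) := by
      rw [_root_.map_smul]; rfl
    have h2 : L ((@fourierBasis (2 * π) _) k)
        = ⟪u, rieszPlus ((@fourierBasis (2 * π) _) k)⟫_ℂ := rfl
    rw [h1, h2, hbk, aux_rieszPlus_fourierLp k]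
    split_ifs with hk
    · rw [← inner_conj_symm u, ← hbk, ← HilbertBasis.repr_apply_apply,
        fourierBasis_repr, fourierBasis_repr]
      ring
    · simp
  simp only [hterm] at h
  have hLv : L v = ⟪u, rieszPlus v⟫_ℂ := rfl
  rw [hLv] at h
  have hsupp : ∀ k : ℤ, k ∉ Set.range ((↑·) : ℕ → ℤ) →
      (if 0 ≤ k then (starRingEnd ℂ) (fourierCoeff (u : AddCircle (2 * π) → ℂ) k)
          * fourierCoeff (v : AddCircle (2 * π) → ℂ) k else 0) = 0 := by
    intro k hk
    rw [if_neg]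
    intro h0
    exact hk ⟨k.toNat, by simpa using (Int.toNat_of_nonneg h0)⟩
  have hfin := (Function.Injective.hasSum_iff
    (fun a b hab => by exact_mod_cast hab) hsupp).mpr h
  simpa [Function.comp_def] using hfin

lemma aux_inner_term (x y : Lp ℂ 2 (@haarAddCircle (2 * π) _)) (k : ℤ) :
    ⟪x, (@fourierBasis (2 * π) _) k⟫_ℂ * ⟪(@fourierBasis (2 * π) _) k, y⟫_ℂ
      = (starRingEnd ℂ) (fourierCoeff (x : AddCircle (2 * π) → ℂ) k)
        * fourierCoeff (y : AddCircle (2 * π) → ℂ) k := by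
  rw [← inner_conj_symm x, ← HilbertBasis.repr_apply_apply, ← HilbertBasis.repr_apply_apply,
    fourierBasis_repr, fourierBasis_repr]

theorem stmt_15 (f g : AddCircle (2 * π) → ℂ)
    (hf : MemLp f ⊤ (@haarAddCircle (2 * π) _)) (hg : MemLp g ⊤ (@haarAddCircle (2 * π) _))
    (Mf Mg : Lp ℂ 2 (@haarAddCircle (2 * π) _) →L[ℂ] Lp ℂ 2 (@haarAddCircle (2 * π) _))
    (hMf : ∀ u : Lp ℂ 2 (@haarAddCircle (2 * π) _),
      (Mf u : AddCircle (2 * π) → ℂ) =ᵐ[@haarAddCircle (2 * π) _] fun x => f x * u x)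
    (hMg : ∀ u : Lp ℂ 2 (@haarAddCircle (2 * π) _),
      (Mg u : AddCircle (2 * π) → ℂ) =ᵐ[@haarAddCircle (2 * π) _] fun x => g x * u x)
    (hfg : (fun x => starRingEnd ℂ (f x)) =ᵐ[@haarAddCircle (2 * π) _] g)
    (W : Lp ℂ 2 (@haarAddCircle (2 * π) _) →L[ℂ] Lp ℂ 2 (@haarAddCircle (2 * π) _))
    (hW : W = Mg ∘L (Mf ∘L rieszPlus - rieszPlus ∘L Mf)
            - Mf ∘L (Mg ∘L rieszPlus - rieszPlus ∘L Mg)) :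
    ∀ m n : ℕ,
      ⟪(fourierLp 2 (m : ℤ) : Lp ℂ 2 (@haarAddCircle (2 * π) _)),
          W (fourierLp 2 (n : ℤ))⟫_ℂ
        = ∑' j : ℕ,
            (starRingEnd ℂ (fourierCoeff f (-(j + m + 1 : ℤ)))
                * fourierCoeff f (-(j + n + 1 : ℤ))
              - starRingEnd ℂ (fourierCoeff g (-(j + m + 1 : ℤ)))
                * fourierCoeff g (-(j + n + 1 : ℤ))) := by
  intro m n
  have hconjg : ∀ᵐ x ∂(@haarAddCircle (2 * π) _), (starRingEnd ℂ) (f x) = g x := hfg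
  set em : Lp ℂ 2 (@haarAddCircle (2 * π) _) := fourierLp 2 (m : ℤ) with hem
  set en : Lp ℂ 2 (@haarAddCircle (2 * π) _) := fourierLp 2 (n : ℤ) with hen
  -- adjoint relations
  have hadjf : ∀ w : Lp ℂ 2 (@haarAddCircle (2 * π) _), ⟪em, Mf w⟫_ℂ = ⟪Mg em, w⟫_ℂ := by
    intro w
    rw [L2.inner_def, L2.inner_def]
    apply integral_congr_ae
    filter_upwards [hMf w, hMg em, hconjg] with x h1 h2 h3
    simp only [RCLike.inner_apply]
    rw [h1, h2, ← h3]
    simp only [map_mul, Complex.conj_conj]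
    ring
  have hadjg : ∀ w : Lp ℂ 2 (@haarAddCircle (2 * π) _), ⟪em, Mg w⟫_ℂ = ⟪Mf em, w⟫_ℂ := by
    intro w
    rw [L2.inner_def, L2.inner_def]
    apply integral_congr_ae
    filter_upwards [hMg w, hMf em, hconjg] with x h1 h2 h3
    simp only [RCLike.inner_apply]
    rw [h1, h2, ← h3]
    simp only [map_mul, Complex.conj_conj]
    ring
  -- Riesz projection fixes e_n
  have hRen : rieszPlus en = en := by
    rw [hen, aux_rieszPlus_fourierLp]
    exact if_pos (Int.natCast_nonneg n)
  -- multiplication operators commute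
  have hcomm : Mg (Mf en) = Mf (Mg en) := by
    apply Lp.ext
    filter_upwards [hMg (Mf en), hMf en, hMf (Mg en), hMg en] with x h1 h2 h3 h4
    rw [h1, h2, h3, h4]; ring
  have hWen : W en = Mf (rieszPlus (Mg en)) - Mg (rieszPlus (Mf en)) := by
    rw [hW]
    simp only [ContinuousLinearMap.sub_apply, ContinuousLinearMap.comp_apply, map_sub, hRen]
    rw [hcomm]
    abel
  -- Fourier coefficients of Mg e_l, Mf e_l
  have hcoefg : ∀ l k : ℤ,
      fourierCoeff ((Mg (fourierLp 2 l) : Lp ℂ 2 (@haarAddCircle (2 * π) _)) :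
        AddCircle (2 * π) → ℂ) k = fourierCoeff g (k - l) := by
    intro l k
    have h1 : ((Mg (fourierLp 2 l) : Lp ℂ 2 (@haarAddCircle (2 * π) _)) :
        AddCircle (2 * π) → ℂ) =ᵐ[@haarAddCircle (2 * π) _] fun x => g x * fourier l x := by
      filter_upwards [hMg (fourierLp 2 l), coeFn_fourierLp 2 l] with x hx hy
      rw [hx, hy]
    rw [aux_fourierCoeff_congr h1, aux_fourierCoeff_mul_fourier]
  have hcoeff : ∀ l k : ℤ,
      fourierCoeff ((Mf (fourierLp 2 l) : Lp ℂ 2 (@haarAddCircle (2 * π) _)) :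
        AddCircle (2 * π) → ℂ) k = fourierCoeff f (k - l) := by
    intro l k
    have h1 : ((Mf (fourierLp 2 l) : Lp ℂ 2 (@haarAddCircle (2 * π) _)) :
        AddCircle (2 * π) → ℂ) =ᵐ[@haarAddCircle (2 * π) _] fun x => f x * fourier l x := by
      filter_upwards [hMf (fourierLp 2 l), coeFn_fourierLp 2 l] with x hx hy
      rw [hx, hy]
    rw [aux_fourierCoeff_congr h1, aux_fourierCoeff_mul_fourier]
  -- sums over ℕ (projection)
  have hSg := aux_hasSum_inner_rieszPlus (Mg em) (Mg en)
  have hSf := aux_hasSum_inner_rieszPlus (Mf em) (Mf en)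
  rw [hem] at hSg hSf
  simp only [hcoefg, hcoeff] at hSg hSf
  -- sums over ℤ (full inner products)
  have hIg := (@fourierBasis (2 * π) _).hasSum_inner_mul_inner (Mg em) (Mg en)
  have hIf := (@fourierBasis (2 * π) _).hasSum_inner_mul_inner (Mf em) (Mf en)
  simp only [aux_inner_term] at hIg hIf
  rw [hem] at hIg hIf
  simp only [hcoefg, hcoeff] at hIg hIf
  -- the two full inner products agree
  have hIgf : ⟪Mg em, Mg en⟫_ℂ = ⟪Mf em, Mf en⟫_ℂ := by
    rw [L2.inner_def, L2.inner_def]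
    apply integral_congr_ae
    filter_upwards [hMg em, hMg en, hMf em, hMf en, hconjg] with x h1 h2 h3 h4 h5
    simp only [RCLike.inner_apply]
    rw [h1, h2, h3, h4, ← h5]
    simp only [map_mul, Complex.conj_conj]
    ring
  -- negative-index sums
  have hgneg := (hIg.nat_add_neg_add_one).sub hSg
  have hfneg := (hIf.nat_add_neg_add_one).sub hSf
  have hdiff := hfneg.sub hgneg
  have key := hdiff.tsum_eq
  have hW2 : ⟪em, W en⟫_ℂ = ⟪Mg em, rieszPlus (Mg en)⟫_ℂ - ⟪Mf em, rieszPlus (Mf en)⟫_ℂ := by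
    rw [hWen, inner_sub_right, hadjf, hadjg]
  rw [hW2]
  have hsumeq : ∑' j : ℕ,
      (starRingEnd ℂ (fourierCoeff f (-(j + m + 1 : ℤ))) * fourierCoeff f (-(j + n + 1 : ℤ))
        - starRingEnd ℂ (fourierCoeff g (-(j + m + 1 : ℤ))) * fourierCoeff g (-(j + n + 1 : ℤ)))
      = (⟪Mf em, Mf en⟫_ℂ - ⟪Mf em, rieszPlus (Mf en)⟫_ℂ)
        - (⟪Mg em, Mg en⟫_ℂ - ⟪Mg em, rieszPlus (Mg en)⟫_ℂ) := by
    rw [← key]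
    apply tsum_congr
    intro j
    have e1 : (-((j : ℤ) + 1) - (m : ℤ)) = -((j : ℤ) + m + 1) := by ring
    have e2 : (-((j : ℤ) + 1) - (n : ℤ)) = -((j : ℤ) + n + 1) := by ring
    simp only [hen, hcoeff, hcoefg, e1, e2]
    ring
  rw [hsumeq, hIgf]
  ring
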